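/- Let μ be a Borel probability measure on the closed unit ball 𝔹^d ⊂ ℝ^d. Then either there exists a hyperplane H through the origin with μ(H ∩ 𝔹^d) = 1, or there exist constants c, p > 0 and disjoint measurable sets A_1, …, A_d ⊆ 𝔹^d such that (i) for every unit vector e there is some i ∈ [d] with |⟨x, e⟩| ≥ c for all x ∈ A_i, and (ii) μ(A_i) ≥ p for each i. -/

import Mathlib

open MeasureTheory
open scoped RealInnerProductSpace

lemma null_compl_support {α : Type*} [TopologicalSpace α] [MeasurableSpace α]
    [SecondCountableTopology α]
    (μ : Measure α) : μ {x : α | ∀ U ∈ nhds x, μ U ≠ 0}ᶜ = 0 := by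
  have h : {x : α | ∀ U ∈ nhds x, μ U ≠ 0}ᶜ = ⋃₀ {U : Set α | IsOpen U ∧ μ U = 0} := by
    ext x
    simp only [Set.mem_compl_iff, Set.mem_setOf_eq, not_forall, Set.mem_sUnion]
    constructor
    · rintro ⟨U, hU, hU0⟩
      exact ⟨interior U, ⟨isOpen_interior, measure_mono_null interior_subset (not_not.mp hU0)⟩,
        mem_interior_iff_mem_nhds.2 hU⟩
    · rintro ⟨U, ⟨hUo, hU0⟩, hxU⟩
      exact ⟨U, hUo.mem_nhds hxU, by simp [hU0]⟩
  obtain ⟨T, hTc, hTsub, hTU⟩ := TopologicalSpace.isOpen_sUnion_countable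
    {U : Set α | IsOpen U ∧ μ U = 0} (fun U hU => hU.1)
  rw [h, ← hTU]
  exact (measure_sUnion_null_iff hTc).2 fun s hs => (hTsub hs).2

theorem decomposition (d : ℕ) (hd : 1 ≤ d)
    (μ : Measure (EuclideanSpace ℝ (Fin d))) [IsProbabilityMeasure μ]
    (hsupp : μ {x : EuclideanSpace ℝ (Fin d) | ‖x‖ ≤ 1} = 1) :
    (∃ H : Submodule ℝ (EuclideanSpace ℝ (Fin d)), Module.finrank ℝ H = d - 1 ∧
        μ ((H : Set (EuclideanSpace ℝ (Fin d))) ∩ {x | ‖x‖ ≤ 1}) = 1) ∨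
    (∃ c p : ℝ, 0 < c ∧ 0 < p ∧
      ∃ A : Fin d → Set (EuclideanSpace ℝ (Fin d)),
        (∀ i, MeasurableSet (A i)) ∧
        (∀ i, A i ⊆ {x | ‖x‖ ≤ 1}) ∧
        (Pairwise fun i j => Disjoint (A i) (A j)) ∧
        (∀ e : EuclideanSpace ℝ (Fin d), ‖e‖ = 1 →
          ∃ i, ∀ x ∈ A i, c ≤ abs ⟪x, e⟫) ∧
        (∀ i, ENNReal.ofReal p ≤ μ (A i))) := by
  classical
  set V := EuclideanSpace ℝ (Fin d) with hV
  by_cases hH : ∃ H : Submodule ℝ V, Module.finrank ℝ H = d - 1 ∧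
      μ ((H : Set V) ∩ {x | ‖x‖ ≤ 1}) = 1
  · exact Or.inl hH
  right
  have hdimV : Module.finrank ℝ V = d := finrank_euclideanSpace_fin
  set B : Set V := {x : V | ‖x‖ ≤ 1} with hBdef
  have hB : B = Metric.closedBall 0 1 := by
    ext y; simp [hBdef, Metric.mem_closedBall, dist_zero_right]
  have hBmeas : MeasurableSet B := by rw [hB]; exact measurableSet_closedBall
  have hBc : μ Bᶜ = 0 := by
    rw [measure_compl hBmeas (measure_ne_top μ B), hsupp, measure_univ, tsub_self]
  set S : Set V := {x : V | ∀ U ∈ nhds x, μ U ≠ 0} with hSdef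
  have hSc : μ Sᶜ = 0 := null_compl_support μ
  -- the support spans
  have hspan : Submodule.span ℝ S = ⊤ := by
    by_contra hne
    have hob : (Submodule.span ℝ S)ᗮ ≠ ⊥ := by
      intro h
      exact hne (Submodule.orthogonal_eq_bot_iff.mp h)
    obtain ⟨v, hvmem, hv0⟩ := Submodule.ne_bot_iff _ |>.mp hob
    refine hH ⟨(ℝ ∙ v)ᗮ, ?_, ?_⟩
    · have h1 : Module.finrank ℝ (ℝ ∙ v) = 1 := finrank_span_singleton hv0
      have := Submodule.finrank_add_finrank_orthogonal (K := ℝ ∙ v) (E := V)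
      rw [h1, hdimV] at this
      omega
    · have hSH : S ⊆ ((ℝ ∙ v)ᗮ : Set V) := by
        intro w hw
        have hwv : ⟪w, v⟫ = 0 := hvmem w (Submodule.subset_span hw)
        rw [SetLike.mem_coe, Submodule.mem_orthogonal_singleton_iff_inner_right,
          real_inner_comm]
        exact hwv
      have hHc : μ (((ℝ ∙ v)ᗮ : Set V))ᶜ = 0 :=
        measure_mono_null (Set.compl_subset_compl.mpr hSH) hSc
      rw [Set.inter_comm, measure_inter_conull hHc]
      exact hsupp
  -- pick d linearly independent points in the support
  obtain ⟨t, hts, hspan', hli⟩ := exists_linearIndependent ℝ S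
  rw [hspan] at hspan'
  have htfin : t.Finite := hli.setFinite
  haveI : Fintype t := htfin.fintype
  have hcard : Fintype.card t = d := by
    let b : Module.Basis t ℝ V := Module.Basis.mk hli (by rw [Subtype.range_coe, hspan'])
    rw [← hdimV, Module.finrank_eq_card_basis b]
  let eqv : t ≃ Fin d := Fintype.equivFinOfCardEq hcard
  set x : Fin d → V := fun i => ((eqv.symm i : t) : V) with hxdef
  have hxS : ∀ i, x i ∈ S := fun i => hts (eqv.symm i).2
  have hxrange : Submodule.span ℝ (Set.range x) = ⊤ := by
    have : Set.range x = t := by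
      ext y
      constructor
      · rintro ⟨i, rfl⟩; exact (eqv.symm i).2
      · intro hy; exact ⟨eqv ⟨y, hy⟩, by simp [hxdef]⟩
    rw [this, hspan']
  have hxinj : Function.Injective x := by
    intro i j hij
    have := Subtype.coe_injective hij
    exact eqv.symm.injective this
  -- the nondegeneracy: inner with all x i zero implies zero
  have hnondeg : ∀ e : V, (∀ i, ⟪x i, e⟫ = 0) → e = 0 := by
    intro e he
    have hall : ∀ w ∈ Submodule.span ℝ (Set.range x), ⟪w, e⟫ = 0 := by
      intro w hw
      induction hw using Submodule.span_induction with
      | mem w hw => obtain ⟨i, rfl⟩ := hw; exact he i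
      | zero => simp
      | add a b _ _ ha hb => rw [inner_add_left, ha, hb, add_zero]
      | smul r a _ ha => rw [inner_smul_left, ha, mul_zero]
    have : ⟪e, e⟫ = 0 := hall e (by rw [hxrange]; trivial)
    exact inner_self_eq_zero.mp this
  -- compactness: minimum of sum of squared inner products on the sphere
  haveI : Nonempty (Fin d) := ⟨⟨0, hd⟩⟩
  set g : V → ℝ := fun e => ∑ i, (⟪x i, e⟫) ^ 2 with hgdef
  have hgcont : Continuous g := by
    apply continuous_finset_sum
    intro i _
    exact ((innerSL ℝ (x i)).continuous).pow 2
  have hsph : IsCompact (Metric.sphere (0 : V) 1) := isCompact_sphere 0 1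
  have hsphne : (Metric.sphere (0 : V) 1).Nonempty := by
    refine ⟨EuclideanSpace.single ⟨0, hd⟩ 1, ?_⟩
    rw [Metric.mem_sphere, dist_zero_right, EuclideanSpace.norm_single]
    norm_num
  obtain ⟨e₀, he₀, hmin⟩ := hsph.exists_isMinOn hsphne hgcont.continuousOn
  have he₀norm : ‖e₀‖ = 1 := by simpa [dist_zero_right] using he₀
  set m : ℝ := g e₀ with hmdef
  have hm : 0 < m := by
    rcases lt_or_eq_of_le (Finset.sum_nonneg fun i _ => sq_nonneg (⟪x i, e₀⟫ : ℝ)) with h | h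
    · exact h
    · exfalso
      have hz : ∀ i, ⟪x i, e₀⟫ = 0 := by
        intro i
        have := (Finset.sum_eq_zero_iff_of_nonneg fun j _ => sq_nonneg (⟪x j, e₀⟫ : ℝ)).mp h.symm
        exact pow_eq_zero_iff (n := 2) (by norm_num) |>.mp (this i (Finset.mem_univ i))
      have : e₀ = 0 := hnondeg e₀ hz
      rw [this] at he₀norm
      simp at he₀norm
  set c0 : ℝ := Real.sqrt (m / d) with hc0def
  have hc0 : 0 < c0 := Real.sqrt_pos.mpr (div_pos hm (by exact_mod_cast hd))
  have hkey : ∀ e : V, ‖e‖ = 1 → ∃ i, c0 ≤ |⟪x i, e⟫| := by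
    intro e he
    by_contra hcon
    push_neg at hcon
    have hge : m ≤ g e := hmin (by simp [Metric.mem_sphere, dist_zero_right, he])
    have hlt : g e < m := by
      have : ∀ i ∈ Finset.univ, (⟪x i, e⟫ : ℝ) ^ 2 < m / d := by
        intro i _
        have h1 : |⟪x i, e⟫| < c0 := hcon i
        have := sq_lt_sq' (by linarith [abs_nonneg (⟪x i, e⟫ : ℝ), neg_abs_le (⟪x i, e⟫ : ℝ)]) (lt_of_abs_lt h1)
        calc (⟪x i, e⟫ : ℝ) ^ 2 ≤ |⟪x i, e⟫| ^ 2 := by rw [sq_abs]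
          _ < c0 ^ 2 := by
              apply sq_lt_sq' _ h1
              linarith [abs_nonneg (⟪x i, e⟫ : ℝ)]
          _ = m / d := Real.sq_sqrt (le_of_lt (div_pos hm (by exact_mod_cast hd)))
      calc g e < ∑ _i : Fin d, m / d := Finset.sum_lt_sum_of_nonempty Finset.univ_nonempty this
        _ = d * (m / d) := by rw [Finset.sum_const, Finset.card_univ, Fintype.card_fin, nsmul_eq_mul]
        _ = m := by field_simp
    linarith
  -- radius
  set P : Finset (Fin d × Fin d) := Finset.univ.offDiag with hPdef
  set s : ℝ := if h : P.Nonempty then P.inf' h (fun q => dist (x q.1) (x q.2)) else 1 with hsdef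
  have hs : 0 < s := by
    rw [hsdef]
    split_ifs with h
    · rw [Finset.lt_inf'_iff]
      intro q hq
      have : q.1 ≠ q.2 := (Finset.mem_offDiag.mp hq).2.2
      exact dist_pos.mpr fun hxy => this (hxinj hxy)
    · norm_num
  set r : ℝ := min (c0 / 2) (s / 3) with hrdef
  have hr : 0 < r := lt_min (by linarith) (by linarith)
  set A : Fin d → Set V := fun i => Metric.closedBall (x i) r ∩ B with hAdef
  have hAmeas : ∀ i, MeasurableSet (A i) := fun i =>
    measurableSet_closedBall.inter hBmeas
  have hAsub : ∀ i, A i ⊆ B := fun i => Set.inter_subset_right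
  have hAdisj : Pairwise fun i j => Disjoint (A i) (A j) := by
    intro i j hij
    have hP : ((i, j) : Fin d × Fin d) ∈ P := Finset.mem_offDiag.mpr ⟨Finset.mem_univ _, Finset.mem_univ _, hij⟩
    have hsle : s ≤ dist (x i) (x j) := by
      rw [hsdef]
      rw [dif_pos ⟨(i, j), hP⟩]
      exact Finset.inf'_le _ hP
    have hdisj : Disjoint (Metric.closedBall (x i) r) (Metric.closedBall (x j) r) := by
      apply Metric.closedBall_disjoint_closedBall
      have : r ≤ s / 3 := min_le_right _ _
      linarith
    exact hdisj.mono Set.inter_subset_left Set.inter_subset_left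
  have hAμ : ∀ i, 0 < μ (A i) := by
    intro i
    have : μ (A i) = μ (Metric.closedBall (x i) r) := measure_inter_conull hBc
    rw [this]
    have hnb : Metric.closedBall (x i) r ∈ nhds (x i) := Metric.closedBall_mem_nhds _ hr
    exact pos_iff_ne_zero.mpr (hxS i _ hnb)
  set p : ℝ := Finset.univ.inf' Finset.univ_nonempty (fun i => (μ (A i)).toReal) with hpdef
  have hp : 0 < p := by
    rw [hpdef, Finset.lt_inf'_iff]
    intro i _
    exact ENNReal.toReal_pos (hAμ i).ne' (measure_ne_top μ _)
  refine ⟨c0 / 2, p, by linarith, hp, A, hAmeas, hAsub, hAdisj, ?_, ?_⟩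
  · intro e he
    obtain ⟨i, hi⟩ := hkey e he
    refine ⟨i, fun y hy => ?_⟩
    have hdist : ‖x i - y‖ ≤ r := by
      have := hy.1
      rw [Metric.mem_closedBall, dist_comm] at this
      rwa [← dist_eq_norm]
    have hCS : |⟪x i - y, e⟫| ≤ r := by
      calc |⟪x i - y, e⟫| ≤ ‖x i - y‖ * ‖e‖ := abs_real_inner_le_norm _ _
        _ = ‖x i - y‖ := by rw [he, mul_one]
        _ ≤ r := hdist
    have hsplit : (⟪x i, e⟫ : ℝ) = ⟪y, e⟫ + ⟪x i - y, e⟫ := by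
      rw [inner_sub_left]; ring
    have : c0 ≤ |⟪y, e⟫| + r := by
      calc c0 ≤ |⟪x i, e⟫| := hi
        _ ≤ |⟪y, e⟫| + |⟪x i - y, e⟫| := by rw [hsplit]; exact abs_add_le _ _
        _ ≤ |⟪y, e⟫| + r := by linarith
    have hrle : r ≤ c0 / 2 := min_le_left _ _
    linarith
  · intro i
    have h1 : p ≤ (μ (A i)).toReal := Finset.inf'_le _ (Finset.mem_univ i)
    calc ENNReal.ofReal p ≤ ENNReal.ofReal (μ (A i)).toReal := ENNReal.ofReal_le_ofReal h1
      _ = μ (A i) := ENNReal.ofReal_toReal (measure_ne_top μ _)
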